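/- There is an absolute constant D > 0 such that for every H ∈ (0,1) with H ≠ 1/2, every t ∈ [0,1], every integer j ≥ 0 and every integer k with 1 ≤ k ≤ 2^j − 1, the quantity ĥ_{t,H,j,k} = 2^{j/2} ( ((2k+2)/2^{j+1}) ∫_{(2k+1)/2^{j+1}}^{(2k+2)/2^{j+1}} G_{t,H}(x) dx − (2k/2^{j+1}) ∫_{2k/2^{j+1}}^{(2k+1)/2^{j+1}} G_{t,H}(x) dx ) satisfies |ĥ_{t,H,j,k}| ≤ D · 2^{−j(1−H)} · (k+1)^{−(H + 1/2)}. -/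

import Mathlib

open MeasureTheory ProbabilityTheory Real Filter

noncomputable section

/-- The mother Haar wavelet: 1 on [0,1/2), -1 on [1/2,1], 0 otherwise. -/
def haarMother (s : ℝ) : ℝ :=
  if s ∈ Set.Ico (0 : ℝ) (1/2) then 1 else if s ∈ Set.Icc (1/2 : ℝ) 1 then -1 else 0

/-- The Haar orthonormal basis of L²[0,1]: `haarFun 0 = 1` on `[0,1]`, and for
`n = 2^j + k` with `0 ≤ k < 2^j`, `haarFun n s = 2^(j/2) * haarMother (2^j * s - k)`. -/
def haarFun (n : ℕ) (s : ℝ) : ℝ :=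
  if n = 0 then (if s ∈ Set.Icc (0 : ℝ) 1 then 1 else 0)
  else (2 : ℝ) ^ ((Nat.log2 n : ℝ) / 2) *
    haarMother ((2 : ℝ) ^ (Nat.log2 n : ℕ) * s - ((n - 2 ^ Nat.log2 n : ℕ) : ℝ))

/-- Inner product on L²[0,1]. -/
def innerUnit (f g : ℝ → ℝ) : ℝ := ∫ s in (0 : ℝ)..1, f s * g s

/-- Inner product on L²[-1,0]. -/
def innerNeg (f g : ℝ → ℝ) : ℝ := ∫ s in (-1 : ℝ)..0, f s * g s

/-- The Haar orthonormal basis of L²[-1,0]. -/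
def haarFunNeg (n : ℕ) (s : ℝ) : ℝ := haarFun n (s + 1)

/-- `f_t^{(1)}(s) = (t-s)^(H-1/2)` for `s ∈ [0,t)`, `0` otherwise. -/
def f1 (H t : ℝ) (s : ℝ) : ℝ := if 0 ≤ s ∧ s < t then (t - s) ^ (H - 1/2) else 0

/-- `f_t^{(2)}(s) = (t-s)^(H-1/2) - (-s)^(H-1/2)` for `s ∈ [-1,0)`, `0` otherwise. -/
def f2 (H t : ℝ) (s : ℝ) : ℝ :=
  if -1 ≤ s ∧ s < 0 then (t - s) ^ (H - 1/2) - (-s) ^ (H - 1/2) else 0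

/-- Haar coefficient `⟨f_t^{(1)}, ℋ_n⟩`. -/
def coeff1 (H t : ℝ) (n : ℕ) : ℝ := innerUnit (f1 H t) (haarFun n)

/-- Haar coefficient `⟨f_t^{(2)}, ℋ̃_n⟩`. -/
def coeff2 (H t : ℝ) (n : ℕ) : ℝ := innerNeg (f2 H t) (haarFunNeg n)

/-- `g_n(t,H) = ∫₀¹ ((t + 1/x)^(H-3/2) - (1/x)^(H-3/2)) x⁻³ (∫₀ˣ ℋ_n(y) dy) dx`. -/
def gCoeff (H t : ℝ) (n : ℕ) : ℝ :=
  ∫ x in (0 : ℝ)..1,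
    ((t + x⁻¹) ^ (H - 3/2) - (x⁻¹) ^ (H - 3/2)) * (x⁻¹) ^ (3 : ℕ) *
      (∫ y in (0 : ℝ)..x, haarFun n y)

/-- `C_H = 1/Γ(H + 1/2)`. -/
def CH (H : ℝ) : ℝ := 1 / Real.Gamma (H + 1/2)

/-- `G_{t,H}(x) = ((t + 1/x)^(H-3/2) - (1/x)^(H-3/2)) x⁻³`. -/
def Gfun (H t : ℝ) (x : ℝ) : ℝ :=
  ((t + x⁻¹) ^ (H - 3/2) - (x⁻¹) ^ (H - 3/2)) * (x⁻¹) ^ (3 : ℕ)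


namespace Stmt18Aux

/-- MVT bound: for `p < 0`, `|(t+u)^p - u^p| ≤ (-p) * u^(p-1) * t`. -/
lemma abs_rpow_shift_sub_le {u t p : ℝ} (hu : 0 < u) (ht : 0 ≤ t) (hp : p < 0) :
    |(t + u) ^ p - u ^ p| ≤ (-p) * u ^ (p - 1) * t := by
  have key : ∀ y ∈ Set.Icc (0:ℝ) t,
      HasDerivWithinAt (fun y => (u + y) ^ p) (1 * p * (u + y) ^ (p - 1)) (Set.Icc 0 t) y := by
    intro y hy
    have h1 : HasDerivAt (fun y : ℝ => u + y) 1 y := by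
      simpa using (hasDerivAt_id y).const_add u
    have h2 : u + y ≠ 0 := by nlinarith [hy.1]
    exact (h1.rpow_const (Or.inl h2)).hasDerivWithinAt
  have bound : ∀ y ∈ Set.Icc (0:ℝ) t,
      ‖1 * p * (u + y) ^ (p - 1)‖ ≤ (-p) * u ^ (p - 1) := by
    intro y hy
    have huy : (0:ℝ) < u + y := by nlinarith [hy.1]
    have h3 : (u + y) ^ (p - 1) ≤ u ^ (p - 1) :=
      Real.rpow_le_rpow_of_nonpos hu (by linarith [hy.1]) (by linarith)
    have h4 : (0:ℝ) ≤ (u + y) ^ (p - 1) := (Real.rpow_pos_of_pos huy _).le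
    rw [one_mul, norm_mul, Real.norm_eq_abs, Real.norm_eq_abs, abs_of_nonpos hp.le,
      abs_of_nonneg h4]
    exact mul_le_mul_of_nonneg_left h3 (by linarith)
  have hmvt := (convex_Icc (0:ℝ) t).norm_image_sub_le_of_norm_hasDerivWithin_le key bound
      (Set.left_mem_Icc.2 ht) (Set.right_mem_Icc.2 ht)
  have : |(u + t) ^ p - u ^ p| ≤ (-p) * u ^ (p - 1) * t := by
    simpa [Real.norm_eq_abs, abs_of_nonneg ht] using hmvt
  rwa [add_comm t u]

/-- Derivative of `Gfun`. -/
lemma Gfun_hasDerivAt {H t x : ℝ} (hx : 0 < x) (ht : 0 ≤ t) :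
    HasDerivAt (Gfun H t)
      ((-(x ^ 2)⁻¹ * (H - 3/2) * (t + x⁻¹) ^ (H - 3/2 - 1)
          - -(x ^ 2)⁻¹ * (H - 3/2) * (x⁻¹) ^ (H - 3/2 - 1)) * (x⁻¹) ^ (3 : ℕ)
        + ((t + x⁻¹) ^ (H - 3/2) - (x⁻¹) ^ (H - 3/2))
            * ((3 : ℝ) * (x⁻¹) ^ (2 : ℕ) * (-(x ^ 2)⁻¹))) x := by
  have hinv : HasDerivAt (fun y : ℝ => y⁻¹) (-(x ^ 2)⁻¹) x := hasDerivAt_inv hx.ne'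
  have h1 : HasDerivAt (fun y : ℝ => t + y⁻¹) (-(x ^ 2)⁻¹) x := hinv.const_add t
  have hxi : 0 < x⁻¹ := inv_pos.2 hx
  have hne1 : t + x⁻¹ ≠ 0 := by positivity
  have hne2 : x⁻¹ ≠ 0 := ne_of_gt hxi
  have h2 := h1.rpow_const (p := H - 3/2) (Or.inl hne1)
  have h3 := hinv.rpow_const (p := H - 3/2) (Or.inl hne2)
  have h4 := h2.sub h3
  have h5 : HasDerivAt (fun y : ℝ => (y⁻¹) ^ (3 : ℕ))
      ((3 : ℝ) * (x⁻¹) ^ (2 : ℕ) * (-(x ^ 2)⁻¹)) x := by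
    refine (hinv.pow 3).congr_deriv ?_; norm_num
  have := h4.mul h5
  unfold Gfun
  exact this

/-- Bound on the derivative of `Gfun`. -/
lemma Gfun_deriv_bound {H t x : ℝ} (hH0 : 0 < H) (hH1 : H < 1) (ht0 : 0 ≤ t) (ht1 : t ≤ 1)
    (hx0 : 0 < x) (hx1 : x ≤ 1) :
    |(-(x ^ 2)⁻¹ * (H - 3/2) * (t + x⁻¹) ^ (H - 3/2 - 1)
          - -(x ^ 2)⁻¹ * (H - 3/2) * (x⁻¹) ^ (H - 3/2 - 1)) * (x⁻¹) ^ (3 : ℕ)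
        + ((t + x⁻¹) ^ (H - 3/2) - (x⁻¹) ^ (H - 3/2))
            * ((3 : ℝ) * (x⁻¹) ^ (2 : ℕ) * (-(x ^ 2)⁻¹))|
      ≤ 9 * (x⁻¹) ^ (H + 3/2) := by
  set u := x⁻¹ with hu_def
  have hu : 0 < u := inv_pos.2 hx0
  have hA1 : |(t + u) ^ (H - 3/2 - 1) - u ^ (H - 3/2 - 1)|
      ≤ (5/2) * u ^ (H - 3/2 - 1 - 1) * t := by
    have h := abs_rpow_shift_sub_le hu ht0 (show H - 3/2 - 1 < 0 by linarith)
    refine h.trans ?_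
    have h0 : (0:ℝ) ≤ u ^ (H - 3/2 - 1 - 1) := (Real.rpow_pos_of_pos hu _).le
    nlinarith [mul_nonneg (mul_nonneg hH0.le h0) ht0]
  have hA2 : |(t + u) ^ (H - 3/2) - u ^ (H - 3/2)|
      ≤ (3/2) * u ^ (H - 3/2 - 1) * t := by
    have h := abs_rpow_shift_sub_le hu ht0 (show H - 3/2 < 0 by linarith)
    refine h.trans ?_
    have h0 : (0:ℝ) ≤ u ^ (H - 3/2 - 1) := (Real.rpow_pos_of_pos hu _).le
    nlinarith [mul_nonneg (mul_nonneg hH0.le h0) ht0]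
  have hx2 : (x ^ 2)⁻¹ = u ^ (2 : ℕ) := by rw [hu_def, inv_pow]
  have hrw : (-(x ^ 2)⁻¹ * (H - 3/2) * (t + u) ^ (H - 3/2 - 1)
          - -(x ^ 2)⁻¹ * (H - 3/2) * u ^ (H - 3/2 - 1)) * u ^ (3 : ℕ)
        + ((t + u) ^ (H - 3/2) - u ^ (H - 3/2))
            * ((3 : ℝ) * u ^ (2 : ℕ) * (-(x ^ 2)⁻¹))
      = ((3/2 - H) * ((t + u) ^ (H - 3/2 - 1) - u ^ (H - 3/2 - 1))) * (u ^ (2:ℕ) * u ^ (3:ℕ))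
        + (-3 * ((t + u) ^ (H - 3/2) - u ^ (H - 3/2))) * (u ^ (2:ℕ) * u ^ (2:ℕ)) := by
    rw [hx2]; ring
  rw [hrw]
  have e1 : u ^ (H - 3/2 - 1 - 1) * (u ^ (2:ℕ) * u ^ (3:ℕ)) = u ^ (H + 3/2) := by
    rw [← Real.rpow_natCast u 2, ← Real.rpow_natCast u 3, ← Real.rpow_add hu,
      ← Real.rpow_add hu]
    congr 1
    push_cast; ring
  have e2 : u ^ (H - 3/2 - 1) * (u ^ (2:ℕ) * u ^ (2:ℕ)) = u ^ (H + 3/2) := by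
    rw [← Real.rpow_natCast u 2, ← Real.rpow_add hu, ← Real.rpow_add hu]
    congr 1
    push_cast; ring
  have hu5 : (0:ℝ) ≤ u ^ (2:ℕ) * u ^ (3:ℕ) := by positivity
  have hu4 : (0:ℝ) ≤ u ^ (2:ℕ) * u ^ (2:ℕ) := by positivity
  have hup : (0:ℝ) ≤ u ^ (H + 3/2) := (Real.rpow_pos_of_pos hu _).le
  calc |((3/2 - H) * ((t + u) ^ (H - 3/2 - 1) - u ^ (H - 3/2 - 1))) * (u ^ (2:ℕ) * u ^ (3:ℕ))
        + (-3 * ((t + u) ^ (H - 3/2) - u ^ (H - 3/2))) * (u ^ (2:ℕ) * u ^ (2:ℕ))|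
      ≤ |((3/2 - H) * ((t + u) ^ (H - 3/2 - 1) - u ^ (H - 3/2 - 1))) * (u ^ (2:ℕ) * u ^ (3:ℕ))|
        + |(-3 * ((t + u) ^ (H - 3/2) - u ^ (H - 3/2))) * (u ^ (2:ℕ) * u ^ (2:ℕ))| :=
        abs_add_le _ _
    _ = (3/2 - H) * |(t + u) ^ (H - 3/2 - 1) - u ^ (H - 3/2 - 1)| * (u ^ (2:ℕ) * u ^ (3:ℕ))
        + 3 * |(t + u) ^ (H - 3/2) - u ^ (H - 3/2)| * (u ^ (2:ℕ) * u ^ (2:ℕ)) := by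
        have h32 : |(3/2 : ℝ) - H| = 3/2 - H := abs_of_nonneg (by linarith)
        have h3 : |(-3 : ℝ)| = 3 := by norm_num
        simp only [abs_mul, abs_pow, abs_of_nonneg hu.le, h32, h3]
        try ring
    _ ≤ (3/2 - H) * ((5/2) * u ^ (H - 3/2 - 1 - 1) * t) * (u ^ (2:ℕ) * u ^ (3:ℕ))
        + 3 * ((3/2) * u ^ (H - 3/2 - 1) * t) * (u ^ (2:ℕ) * u ^ (2:ℕ)) := by
        gcongr <;> linarith
    _ = ((3/2 - H) * (5/2) * t) * (u ^ (H - 3/2 - 1 - 1) * (u ^ (2:ℕ) * u ^ (3:ℕ)))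
        + ((9/2) * t) * (u ^ (H - 3/2 - 1) * (u ^ (2:ℕ) * u ^ (2:ℕ))) := by ring
    _ = ((3/2 - H) * (5/2) * t) * u ^ (H + 3/2) + ((9/2) * t) * u ^ (H + 3/2) := by
        rw [e1, e2]
    _ ≤ 9 * u ^ (H + 3/2) := by
        have htu : t * u ^ (H + 3/2) ≤ u ^ (H + 3/2) := mul_le_of_le_one_left hup ht1
        nlinarith [mul_nonneg (mul_nonneg hH0.le ht0) hup]

/-- Bound on `Gfun` itself. -/
lemma Gfun_abs_le {H t x : ℝ} (hH0 : 0 < H) (hH1 : H < 1) (ht0 : 0 ≤ t) (ht1 : t ≤ 1)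
    (hx0 : 0 < x) :
    |Gfun H t x| ≤ (3/2) * (x⁻¹) ^ (H + 1/2) := by
  set u := x⁻¹ with hu_def
  have hu : 0 < u := inv_pos.2 hx0
  have hA : |(t + u) ^ (H - 3/2) - u ^ (H - 3/2)|
      ≤ (3/2) * u ^ (H - 3/2 - 1) * t := by
    have h := abs_rpow_shift_sub_le hu ht0 (show H - 3/2 < 0 by linarith)
    refine h.trans ?_
    have h0 : (0:ℝ) ≤ u ^ (H - 3/2 - 1) := (Real.rpow_pos_of_pos hu _).le
    nlinarith [mul_nonneg (mul_nonneg hH0.le h0) ht0]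
  have e : u ^ (H - 3/2 - 1) * u ^ (3:ℕ) = u ^ (H + 1/2) := by
    rw [← Real.rpow_natCast u 3, ← Real.rpow_add hu]
    congr 1
    push_cast; ring
  have hu3 : (0:ℝ) ≤ u ^ (3:ℕ) := by positivity
  calc |Gfun H t x| = |(t + u) ^ (H - 3/2) - u ^ (H - 3/2)| * u ^ (3:ℕ) := by
        rw [Gfun, abs_mul, abs_of_nonneg hu3]
    _ ≤ ((3/2) * u ^ (H - 3/2 - 1) * t) * u ^ (3:ℕ) :=
        mul_le_mul_of_nonneg_right hA hu3
    _ = ((3/2) * t) * (u ^ (H - 3/2 - 1) * u ^ (3:ℕ)) := by ring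
    _ = ((3/2) * t) * u ^ (H + 1/2) := by rw [e]
    _ ≤ (3/2) * u ^ (H + 1/2) := by
        have : (0:ℝ) ≤ u ^ (H + 1/2) := (Real.rpow_pos_of_pos hu _).le
        nlinarith

/-- Lipschitz estimate for `Gfun` on `[c, d]`. -/
lemma Gfun_lipschitz {H t c d x y : ℝ} (hH0 : 0 < H) (hH1 : H < 1) (ht0 : 0 ≤ t) (ht1 : t ≤ 1)
    (hc : 0 < c) (hd : d ≤ 1) (hx : x ∈ Set.Icc c d) (hy : y ∈ Set.Icc c d) :
    |Gfun H t y - Gfun H t x| ≤ 9 * (c⁻¹) ^ (H + 3/2) * |y - x| := by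
  have key : ∀ z ∈ Set.Icc c d,
      HasDerivWithinAt (Gfun H t)
        ((fun z : ℝ => (-(z ^ 2)⁻¹ * (H - 3/2) * (t + z⁻¹) ^ (H - 3/2 - 1)
          - -(z ^ 2)⁻¹ * (H - 3/2) * (z⁻¹) ^ (H - 3/2 - 1)) * (z⁻¹) ^ (3 : ℕ)
        + ((t + z⁻¹) ^ (H - 3/2) - (z⁻¹) ^ (H - 3/2))
            * ((3 : ℝ) * (z⁻¹) ^ (2 : ℕ) * (-(z ^ 2)⁻¹))) z) (Set.Icc c d) z := by
    intro z hz
    exact (Gfun_hasDerivAt (lt_of_lt_of_le hc hz.1) ht0).hasDerivWithinAt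
  have bound : ∀ z ∈ Set.Icc c d,
      ‖(fun z : ℝ => (-(z ^ 2)⁻¹ * (H - 3/2) * (t + z⁻¹) ^ (H - 3/2 - 1)
          - -(z ^ 2)⁻¹ * (H - 3/2) * (z⁻¹) ^ (H - 3/2 - 1)) * (z⁻¹) ^ (3 : ℕ)
        + ((t + z⁻¹) ^ (H - 3/2) - (z⁻¹) ^ (H - 3/2))
            * ((3 : ℝ) * (z⁻¹) ^ (2 : ℕ) * (-(z ^ 2)⁻¹))) z‖
        ≤ 9 * (c⁻¹) ^ (H + 3/2) := by
    intro z hz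
    have hz0 : 0 < z := lt_of_lt_of_le hc hz.1
    have hz1 : z ≤ 1 := le_trans hz.2 hd
    have h1 := Gfun_deriv_bound hH0 hH1 ht0 ht1 hz0 hz1
    have h2 : (z⁻¹) ^ (H + 3/2) ≤ (c⁻¹) ^ (H + 3/2) := by
      apply Real.rpow_le_rpow (by positivity) _ (by linarith)
      exact inv_anti₀ hc hz.1
    calc ‖_‖ = |(-(z ^ 2)⁻¹ * (H - 3/2) * (t + z⁻¹) ^ (H - 3/2 - 1)
          - -(z ^ 2)⁻¹ * (H - 3/2) * (z⁻¹) ^ (H - 3/2 - 1)) * (z⁻¹) ^ (3 : ℕ)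
        + ((t + z⁻¹) ^ (H - 3/2) - (z⁻¹) ^ (H - 3/2))
            * ((3 : ℝ) * (z⁻¹) ^ (2 : ℕ) * (-(z ^ 2)⁻¹))| := rfl
      _ ≤ 9 * (z⁻¹) ^ (H + 3/2) := h1
      _ ≤ 9 * (c⁻¹) ^ (H + 3/2) := by linarith
  have := (convex_Icc c d).norm_image_sub_le_of_norm_hasDerivWithin_le key bound hx hy
  simpa [Real.norm_eq_abs] using this

end Stmt18Aux

namespace Stmt18Aux

/-- Main integral estimate. -/
lemma main_est {H t A M B h : ℝ} (hH0 : 0 < H) (hH1 : H < 1) (ht0 : 0 ≤ t) (ht1 : t ≤ 1)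
    (hA0 : 0 < A) (hh : 0 < h) (hMA : A + h = M) (hMB : M + h = B) (hB1 : B ≤ 1) :
    |B * (∫ x in M..B, Gfun H t x) - A * (∫ x in A..M, Gfun H t x)|
      ≤ (9 * B * (A⁻¹) ^ (H + 3/2) * h + 3 * h * (A⁻¹) ^ (H + 1/2)) * h := by
  have hAM : A ≤ M := by linarith
  have hMB' : M ≤ B := by linarith
  have hBpos : 0 < B := by linarith
  have hcont : ContinuousOn (Gfun H t) (Set.Ici A) := fun z hz =>
    ((Gfun_hasDerivAt (lt_of_lt_of_le hA0 hz) ht0).differentiableAt.continuousAt).continuousWithinAt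
  have hi2 : IntervalIntegrable (Gfun H t) volume A M := by
    apply ContinuousOn.intervalIntegrable
    apply hcont.mono
    rw [Set.uIcc_of_le hAM]
    exact fun z hz => hz.1
  have hi1 : IntervalIntegrable (fun x => Gfun H t (x + h)) volume A M := by
    apply ContinuousOn.intervalIntegrable
    apply hcont.comp ((continuous_id.add continuous_const).continuousOn)
    intro z hz
    rw [Set.uIcc_of_le hAM] at hz
    have : A ≤ z := hz.1
    simp only [id_eq, Set.mem_Ici, Pi.add_apply]
    linarith
  have hshift : (∫ x in A..M, Gfun H t (x + h)) = ∫ x in M..B, Gfun H t x := by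
    rw [intervalIntegral.integral_comp_add_right (fun x => Gfun H t x) h, hMA, hMB]
  have key : B * (∫ x in M..B, Gfun H t x) - A * (∫ x in A..M, Gfun H t x)
      = ∫ x in A..M, (B * Gfun H t (x + h) - A * Gfun H t x) := by
    rw [intervalIntegral.integral_sub (hi1.const_mul B) (hi2.const_mul A),
      intervalIntegral.integral_const_mul, intervalIntegral.integral_const_mul, hshift]
  have hbound : ∀ x ∈ Set.uIoc A M,
      ‖B * Gfun H t (x + h) - A * Gfun H t x‖
        ≤ 9 * B * (A⁻¹) ^ (H + 3/2) * h + 3 * h * (A⁻¹) ^ (H + 1/2) := by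
    intro x hx
    rw [Set.uIoc_of_le hAM] at hx
    have hxA : A ≤ x := hx.1.le
    have hxM : x ≤ M := hx.2
    have hx0 : 0 < x := lt_of_lt_of_le hA0 hxA
    have hxB : x ∈ Set.Icc A B := ⟨hxA, by linarith⟩
    have hxhB : x + h ∈ Set.Icc A B := ⟨by linarith, by linarith⟩
    have hlip := Gfun_lipschitz hH0 hH1 ht0 ht1 hA0 hB1 hxB hxhB
    have habs : |x + h - x| = h := by
      rw [add_sub_cancel_left, abs_of_pos hh]
    rw [habs] at hlip
    have hG := Gfun_abs_le (H := H) (t := t) hH0 hH1 ht0 ht1 hx0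
    have hmono : (x⁻¹) ^ (H + 1/2) ≤ (A⁻¹) ^ (H + 1/2) :=
      Real.rpow_le_rpow (by positivity) (inv_anti₀ hA0 hxA) (by linarith)
    have hre : B * Gfun H t (x + h) - A * Gfun H t x
        = B * (Gfun H t (x + h) - Gfun H t x) + (B - A) * Gfun H t x := by ring
    rw [Real.norm_eq_abs, hre]
    have t1 : B * |Gfun H t (x + h) - Gfun H t x| ≤ 9 * B * (A⁻¹) ^ (H + 3/2) * h :=
      calc B * |Gfun H t (x + h) - Gfun H t x|
          ≤ B * (9 * (A⁻¹) ^ (H + 3/2) * h) := mul_le_mul_of_nonneg_left hlip hBpos.le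
        _ = 9 * B * (A⁻¹) ^ (H + 3/2) * h := by ring
    have t2 : (B - A) * |Gfun H t x| ≤ 3 * h * (A⁻¹) ^ (H + 1/2) := by
      have hBA : B - A = 2 * h := by linarith
      rw [hBA]
      have h1 : |Gfun H t x| ≤ (3/2) * (A⁻¹) ^ (H + 1/2) := hG.trans (by linarith)
      have h2N : (0:ℝ) ≤ 2 * h := by linarith
      calc (2 * h) * |Gfun H t x| ≤ (2 * h) * ((3/2) * (A⁻¹) ^ (H + 1/2)) :=
            mul_le_mul_of_nonneg_left h1 h2N
        _ = 3 * h * (A⁻¹) ^ (H + 1/2) := by ring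
    calc |B * (Gfun H t (x + h) - Gfun H t x) + (B - A) * Gfun H t x|
        ≤ |B * (Gfun H t (x + h) - Gfun H t x)| + |(B - A) * Gfun H t x| := abs_add_le _ _
      _ = B * |Gfun H t (x + h) - Gfun H t x| + (B - A) * |Gfun H t x| := by
          rw [abs_mul, abs_mul, abs_of_pos hBpos,
            abs_of_pos (show (0:ℝ) < B - A by linarith)]
      _ ≤ 9 * B * (A⁻¹) ^ (H + 3/2) * h + 3 * h * (A⁻¹) ^ (H + 1/2) := by linarith
  rw [key]
  have hres := intervalIntegral.norm_integral_le_of_norm_le_const hbound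
  rw [Real.norm_eq_abs] at hres
  have hMA' : |M - A| = h := by rw [show M - A = h by linarith, abs_of_pos hh]
  rwa [hMA'] at hres

/-- Comparison of the endpoint powers. -/
lemma power_bound {H A B h : ℝ} (hH0 : 0 < H) (hH1 : H < 1) (hA0 : 0 < A) (hBpos : 0 < B)
    (hh : 0 ≤ h) (hBA2 : B / 2 ≤ A) :
    9 * B * (A⁻¹) ^ (H + 3/2) * h + 3 * h * (A⁻¹) ^ (H + 1/2)
      ≤ 84 * h * (B⁻¹) ^ (H + 1/2) := by
  have hAinv : (0:ℝ) ≤ A⁻¹ := inv_nonneg.2 hA0.le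
  have hBinv0 : (0:ℝ) < B⁻¹ := inv_pos.2 hBpos
  have hi : A⁻¹ ≤ 2 * B⁻¹ := by
    have h1 : A⁻¹ ≤ (B / 2)⁻¹ := inv_anti₀ (by linarith) hBA2
    rwa [show (B / 2)⁻¹ = 2 * B⁻¹ by rw [inv_div]; ring] at h1
  have hp1 : (A⁻¹) ^ (H + 3/2) ≤ 8 * (B⁻¹) ^ (H + 3/2) := by
    calc (A⁻¹) ^ (H + 3/2) ≤ (2 * B⁻¹) ^ (H + 3/2) :=
          Real.rpow_le_rpow hAinv hi (by linarith)
      _ = (2:ℝ) ^ (H + 3/2) * (B⁻¹) ^ (H + 3/2) := Real.mul_rpow (by norm_num) hBinv0.le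
      _ ≤ 8 * (B⁻¹) ^ (H + 3/2) := by
          have h1 : (2:ℝ) ^ (H + 3/2) ≤ (2:ℝ) ^ (3:ℝ) :=
            Real.rpow_le_rpow_of_exponent_le (by norm_num) (by linarith)
          have h2 : (2:ℝ) ^ (3:ℝ) = 8 := by
            rw [show (3:ℝ) = ((3:ℕ):ℝ) by norm_num, Real.rpow_natCast]; norm_num
          have h3 : (0:ℝ) ≤ (B⁻¹) ^ (H + 3/2) := Real.rpow_nonneg hBinv0.le _
          nlinarith
  have hp2 : (A⁻¹) ^ (H + 1/2) ≤ 4 * (B⁻¹) ^ (H + 1/2) := by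
    calc (A⁻¹) ^ (H + 1/2) ≤ (2 * B⁻¹) ^ (H + 1/2) :=
          Real.rpow_le_rpow hAinv hi (by linarith)
      _ = (2:ℝ) ^ (H + 1/2) * (B⁻¹) ^ (H + 1/2) := Real.mul_rpow (by norm_num) hBinv0.le
      _ ≤ 4 * (B⁻¹) ^ (H + 1/2) := by
          have h1 : (2:ℝ) ^ (H + 1/2) ≤ (2:ℝ) ^ (2:ℝ) :=
            Real.rpow_le_rpow_of_exponent_le (by norm_num) (by linarith)
          have h2 : (2:ℝ) ^ (2:ℝ) = 4 := by
            rw [show (2:ℝ) = ((2:ℕ):ℝ) by norm_num, Real.rpow_natCast]; norm_num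
          have h3 : (0:ℝ) ≤ (B⁻¹) ^ (H + 1/2) := Real.rpow_nonneg hBinv0.le _
          nlinarith
  have hBB : B * (B⁻¹) ^ (H + 3/2) = (B⁻¹) ^ (H + 1/2) := by
    rw [show H + 3/2 = (H + 1/2) + 1 by ring, Real.rpow_add hBinv0, Real.rpow_one]
    rw [mul_comm, mul_assoc, inv_mul_cancel₀ hBpos.ne', mul_one]
  calc 9 * B * (A⁻¹) ^ (H + 3/2) * h + 3 * h * (A⁻¹) ^ (H + 1/2)
      ≤ 9 * B * (8 * (B⁻¹) ^ (H + 3/2)) * h + 3 * h * (4 * (B⁻¹) ^ (H + 1/2)) := by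
        gcongr
    _ = 72 * (B * (B⁻¹) ^ (H + 3/2)) * h + 12 * h * (B⁻¹) ^ (H + 1/2) := by ring
    _ = 84 * h * (B⁻¹) ^ (H + 1/2) := by rw [hBB]; ring

/-- Collapse of powers of two. -/
lemma collapse {H : ℝ} (j k : ℕ) :
    (2:ℝ) ^ ((j:ℝ)/2) * ((84 * (((2:ℝ) ^ (j + 1))⁻¹) * ((2 ^ j * ((k:ℝ) + 1)⁻¹) ^ (H + 1/2)))
        * ((2:ℝ) ^ (j + 1))⁻¹)
      = 21 * (2:ℝ) ^ (-(j:ℝ) * (1 - H)) * ((k:ℝ) + 1) ^ (-(H + 1/2)) := by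
  have hkpos : (0:ℝ) < (k:ℝ) + 1 := by positivity
  have hsplit : ((2:ℝ) ^ j * ((k:ℝ) + 1)⁻¹) ^ (H + 1/2)
      = (2:ℝ) ^ ((j:ℝ) * (H + 1/2)) * ((k:ℝ) + 1) ^ (-(H + 1/2)) := by
    rw [Real.mul_rpow (by positivity) (by positivity),
      ← Real.rpow_natCast 2 j, ← Real.rpow_mul (by norm_num),
      Real.inv_rpow hkpos.le, ← Real.rpow_neg hkpos.le]
  have hNr : ((2:ℝ) ^ (j + 1))⁻¹ = (2:ℝ) ^ (-((j:ℝ) + 1)) := by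
    rw [Real.rpow_neg (by norm_num : (0:ℝ) ≤ 2),
      show ((j:ℝ) + 1) = ((j + 1 : ℕ) : ℝ) by push_cast; ring, Real.rpow_natCast]
  rw [hsplit, hNr]
  have h2m2 : (2:ℝ) ^ (-(2:ℝ)) = (4:ℝ)⁻¹ := by
    rw [show (-(2:ℝ)) = ((-2 : ℤ) : ℝ) by norm_num, Real.rpow_intCast]
    norm_num
  have hcollapse : (2:ℝ) ^ ((j:ℝ)/2) * ((2:ℝ) ^ (-((j:ℝ) + 1)) * (2:ℝ) ^ (-((j:ℝ) + 1))
        * (2:ℝ) ^ ((j:ℝ) * (H + 1/2)))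
      = (2:ℝ) ^ (-(2:ℝ)) * (2:ℝ) ^ (-(j:ℝ) * (1 - H)) := by
    rw [← Real.rpow_add two_pos, ← Real.rpow_add two_pos, ← Real.rpow_add two_pos,
      ← Real.rpow_add two_pos]
    congr 1
    ring
  calc (2:ℝ) ^ ((j:ℝ)/2) * ((84 * ((2:ℝ) ^ (-((j:ℝ) + 1)))
        * ((2:ℝ) ^ ((j:ℝ) * (H + 1/2)) * ((k:ℝ) + 1) ^ (-(H + 1/2))))
          * (2:ℝ) ^ (-((j:ℝ) + 1)))
      = 84 * ((2:ℝ) ^ ((j:ℝ)/2) * ((2:ℝ) ^ (-((j:ℝ) + 1)) * (2:ℝ) ^ (-((j:ℝ) + 1))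
          * (2:ℝ) ^ ((j:ℝ) * (H + 1/2)))) * ((k:ℝ) + 1) ^ (-(H + 1/2)) := by ring
    _ = 84 * ((2:ℝ) ^ (-(2:ℝ)) * (2:ℝ) ^ (-(j:ℝ) * (1 - H))) * ((k:ℝ) + 1) ^ (-(H + 1/2)) := by
        rw [hcollapse]
    _ = 21 * (2:ℝ) ^ (-(j:ℝ) * (1 - H)) * ((k:ℝ) + 1) ^ (-(H + 1/2)) := by
        rw [h2m2]; ring

end Stmt18Aux

/-- bound on `ĥ_{t,H,j,k}`. -/
theorem stmt18 :
    ∃ D : ℝ, 0 < D ∧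
      ∀ H : ℝ, H ∈ Set.Ioo (0 : ℝ) 1 → H ≠ 1/2 →
      ∀ t : ℝ, t ∈ Set.Icc (0 : ℝ) 1 →
      ∀ j : ℕ, ∀ k : ℕ, 1 ≤ k → k ≤ 2 ^ j - 1 →
        |(2 : ℝ) ^ ((j : ℝ) / 2) *
          (((2 * (k : ℝ) + 2) / 2 ^ (j + 1)) *
              (∫ x in ((2 * (k : ℝ) + 1) / 2 ^ (j + 1))..((2 * (k : ℝ) + 2) / 2 ^ (j + 1)),
                Gfun H t x)
           - (2 * (k : ℝ) / 2 ^ (j + 1)) *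
              (∫ x in (2 * (k : ℝ) / 2 ^ (j + 1))..((2 * (k : ℝ) + 1) / 2 ^ (j + 1)),
                Gfun H t x))|
          ≤ D * (2 : ℝ) ^ (-(j : ℝ) * (1 - H)) * ((k : ℝ) + 1) ^ (-(H + 1/2)) := by
  refine ⟨100, by norm_num, ?_⟩
  rintro H ⟨hH0, hH1⟩ _ t ⟨ht0, ht1⟩ j k hk1 hk2
  have hN : (0:ℝ) < (2:ℝ) ^ (j + 1) := by positivity
  have hNinv : (0:ℝ) < ((2:ℝ) ^ (j + 1))⁻¹ := inv_pos.2 hN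
  have hk1' : (1:ℝ) ≤ (k:ℝ) := by exact_mod_cast hk1
  have hkj : (k:ℝ) + 1 ≤ 2 ^ j := by
    have h1 : (1:ℕ) ≤ 2 ^ j := Nat.one_le_two_pow
    have : k + 1 ≤ 2 ^ j := by omega
    exact_mod_cast this
  have hN2 : ((2:ℝ) ^ (j + 1)) = 2 * 2 ^ j := by rw [pow_succ]; ring
  have hA0 : (0:ℝ) < 2 * (k:ℝ) / 2 ^ (j + 1) := div_pos (by linarith) hN
  have hMA : 2 * (k:ℝ) / 2 ^ (j + 1) + ((2:ℝ) ^ (j + 1))⁻¹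
      = (2 * (k:ℝ) + 1) / 2 ^ (j + 1) := by field_simp
  have hMB : (2 * (k:ℝ) + 1) / 2 ^ (j + 1) + ((2:ℝ) ^ (j + 1))⁻¹
      = (2 * (k:ℝ) + 2) / 2 ^ (j + 1) := by field_simp; ring
  have hB1 : (2 * (k:ℝ) + 2) / 2 ^ (j + 1) ≤ 1 := by
    rw [div_le_one hN, hN2]; linarith
  have hBpos : (0:ℝ) < (2 * (k:ℝ) + 2) / 2 ^ (j + 1) := div_pos (by linarith) hN
  have hest := Stmt18Aux.main_est (t := t) hH0 hH1 ht0 ht1 hA0 hNinv hMA hMB hB1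
  have hBA2 : ((2 * (k:ℝ) + 2) / 2 ^ (j + 1)) / 2 ≤ 2 * (k:ℝ) / 2 ^ (j + 1) := by
    rw [div_div, div_le_div_iff₀ (by positivity) hN]
    nlinarith
  have hpow := Stmt18Aux.power_bound (h := ((2:ℝ) ^ (j + 1))⁻¹) hH0 hH1 hA0 hBpos hNinv.le hBA2
  have hBinv2 : ((2 * (k:ℝ) + 2) / 2 ^ (j + 1))⁻¹ = 2 ^ j * ((k:ℝ) + 1)⁻¹ := by
    rw [hN2, show (2 * (k:ℝ) + 2) = 2 * ((k:ℝ) + 1) by ring]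
    rw [show 2 * ((k:ℝ) + 1) / (2 * 2 ^ j) = ((k:ℝ) + 1) / 2 ^ j by
      rw [mul_div_mul_left _ _ (two_ne_zero)]]
    rw [inv_div, div_eq_mul_inv]
  have hrpos : (0:ℝ) < (2:ℝ) ^ ((j:ℝ)/2) := Real.rpow_pos_of_pos two_pos _
  have hK : (0:ℝ) ≤ ((k:ℝ) + 1) ^ (-(H + 1/2)) := by positivity
  have h2jH : (0:ℝ) < (2:ℝ) ^ (-(j:ℝ) * (1 - H)) := Real.rpow_pos_of_pos two_pos _
  rw [abs_mul, abs_of_pos hrpos]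
  calc (2:ℝ) ^ ((j:ℝ)/2) * |(2 * (k:ℝ) + 2) / 2 ^ (j + 1) *
          (∫ x in ((2 * (k:ℝ) + 1) / 2 ^ (j + 1))..((2 * (k:ℝ) + 2) / 2 ^ (j + 1)), Gfun H t x)
        - 2 * (k:ℝ) / 2 ^ (j + 1) *
          (∫ x in (2 * (k:ℝ) / 2 ^ (j + 1))..((2 * (k:ℝ) + 1) / 2 ^ (j + 1)), Gfun H t x)|
      ≤ (2:ℝ) ^ ((j:ℝ)/2) * ((84 * ((2:ℝ) ^ (j + 1))⁻¹
          * ((((2 * (k:ℝ) + 2) / 2 ^ (j + 1))⁻¹) ^ (H + 1/2))) * ((2:ℝ) ^ (j + 1))⁻¹) := by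
        apply mul_le_mul_of_nonneg_left _ hrpos.le
        refine hest.trans (mul_le_mul_of_nonneg_right ?_ hNinv.le)
        calc 9 * ((2 * (k:ℝ) + 2) / 2 ^ (j + 1))
              * ((2 * (k:ℝ) / 2 ^ (j + 1))⁻¹) ^ (H + 3/2) * ((2:ℝ) ^ (j + 1))⁻¹
            + 3 * ((2:ℝ) ^ (j + 1))⁻¹ * ((2 * (k:ℝ) / 2 ^ (j + 1))⁻¹) ^ (H + 1/2)
            ≤ 84 * ((2:ℝ) ^ (j + 1))⁻¹
              * ((((2 * (k:ℝ) + 2) / 2 ^ (j + 1))⁻¹) ^ (H + 1/2)) := hpow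
          _ = 84 * ((2:ℝ) ^ (j + 1))⁻¹
              * ((((2 * (k:ℝ) + 2) / 2 ^ (j + 1))⁻¹) ^ (H + 1/2)) := rfl
    _ = 21 * (2:ℝ) ^ (-(j:ℝ) * (1 - H)) * ((k:ℝ) + 1) ^ (-(H + 1/2)) := by
        rw [hBinv2]
        exact Stmt18Aux.collapse j k
    _ ≤ 100 * (2:ℝ) ^ (-(j:ℝ) * (1 - H)) * ((k:ℝ) + 1) ^ (-(H + 1/2)) := by
        nlinarith
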